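/- Let k be a field, S = k[z₀,…,z_N] the polynomial ring over k (N ≥ 1), and let P, Q, f, g ∈ S be homogeneous polynomials of positive degree such that (P,Q) is a prime ideal of S, P, Q form a regular sequence in S, and f ∉ (P,Q), g ∉ (P,Q). Let a, b ≥ 2 be natural numbers and set I_X = (P,Q) and I_Z = (f·P^a + g·Q^b, P^{a+1}, P·Q^b, P^a·Q, Q^{b+1}). If A, B, C, D, E ∈ S satisfy A·(f·P^a + g·Q^b) + B·P^{a+1} + C·P·Q^b + D·P^a·Q + E·Q^{b+1} ∈ I_Z·I_X, then A ∈ I_X, and there exist h₁, h₂ ∈ S such that B − h₁·f ∈ I_X, C − h₁·g ∈ I_X, D − h₂·f ∈ I_X, and E − h₂·g ∈ I_X. -/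
import Mathlib


section aux
variable {R : Type*} [CommRing R] [IsDomain R] {P Q : R}

/-- swap: if `P` is a nzd and `Q` regular mod `P`, then `P` regular mod `Q`. -/
lemma auxSwap (hP0 : P ≠ 0) (hQreg : ∀ x : R, P ∣ Q * x → P ∣ x)
    (x : R) (h : Q ∣ P * x) : Q ∣ x := by
  obtain ⟨y, hy⟩ := h
  obtain ⟨z, hz⟩ := hQreg y ⟨x, by linear_combination -hy⟩
  exact ⟨z, mul_left_cancel₀ hP0 (by linear_combination hy + Q * hz)⟩

lemma auxQpow (hP0 : P ≠ 0) (hQ0 : Q ≠ 0) (hQreg : ∀ x : R, P ∣ Q * x → P ∣ x)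
    (b : ℕ) (x : R) (h : Q ^ b ∣ P * x) : Q ^ b ∣ x := by
  induction b generalizing x with
  | zero => simpa using one_dvd x
  | succ n ih =>
    obtain ⟨y, hy⟩ := h
    obtain ⟨z, hz⟩ := auxSwap hP0 hQreg x ⟨Q ^ n * y, by linear_combination hy⟩
    obtain ⟨t, ht⟩ := ih z ⟨y, mul_left_cancel₀ hQ0 (by linear_combination hy - P * hz)⟩
    exact ⟨t, by rw [hz, ht]; ring⟩

lemma auxPQpow (hP0 : P ≠ 0) (hQ0 : Q ≠ 0) (hQreg : ∀ x : R, P ∣ Q * x → P ∣ x)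
    (a b : ℕ) (x : R) (h : Q ^ b ∣ P ^ a * x) : Q ^ b ∣ x := by
  induction a generalizing x with
  | zero => simpa using h
  | succ n ih =>
    apply auxQpow hP0 hQ0 hQreg
    apply ih
    obtain ⟨y, hy⟩ := h
    exact ⟨y, by linear_combination hy⟩

lemma auxReg (hP0 : P ≠ 0) (hQreg : ∀ x : R, P ∣ Q * x → P ∣ x)
    {x y : R} (h : x * P + y * Q = 0) : ∃ t, y = t * P ∧ x = -(t * Q) := by
  obtain ⟨t, ht⟩ := hQreg y ⟨-x, by linear_combination h⟩
  refine ⟨t, by linear_combination ht, mul_left_cancel₀ hP0 ?_⟩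
  linear_combination h - Q * ht

end aux

open MvPolynomial in
/-- (Key computation in Vatne, "Multiple Structures", Ch. 5.)  In `S = k[z₀,…,z_N]`, let
`P, Q, f, g` be homogeneous of positive degree with `(P,Q)` prime, `P, Q` a regular
sequence, and `f, g ∉ (P,Q)`; let `a, b ≥ 2`,
`I_X = (P,Q)` and `I_Z = (f·P^a + g·Q^b, P^(a+1), P·Q^b, P^a·Q, Q^(b+1))`.  If
`A·(f·P^a+g·Q^b) + B·P^(a+1) + C·P·Q^b + D·P^a·Q + E·Q^(b+1) ∈ I_Z·I_X`, then `A ∈ I_X`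
and there are `h₁, h₂` with `B − h₁·f, C − h₁·g, D − h₂·f, E − h₂·g ∈ I_X`. -/
theorem stmt11 {k : Type*} [Field k] (N : ℕ) (hN : 1 ≤ N)
    (P Q f g : MvPolynomial (Fin (N + 1)) k)
    (hP : ∃ d : ℕ, 0 < d ∧ P.IsHomogeneous d) (hQ : ∃ d : ℕ, 0 < d ∧ Q.IsHomogeneous d)
    (hf : ∃ d : ℕ, 0 < d ∧ f.IsHomogeneous d) (hg : ∃ d : ℕ, 0 < d ∧ g.IsHomogeneous d)
    (hprime : (Ideal.span {P, Q}).IsPrime)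
    (hPreg : ∀ x : MvPolynomial (Fin (N + 1)) k, P * x = 0 → x = 0)
    (hQreg : ∀ x : MvPolynomial (Fin (N + 1)) k,
      Q * x ∈ Ideal.span {P} → x ∈ Ideal.span {P})
    (hfnot : f ∉ Ideal.span {P, Q}) (hgnot : g ∉ Ideal.span {P, Q})
    (a b : ℕ) (ha : 2 ≤ a) (hb : 2 ≤ b)
    (A B C D E : MvPolynomial (Fin (N + 1)) k)
    (hmem : A * (f * P ^ a + g * Q ^ b) + B * P ^ (a + 1) + C * (P * Q ^ b) +
        D * (P ^ a * Q) + E * Q ^ (b + 1) ∈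
      Ideal.span {f * P ^ a + g * Q ^ b, P ^ (a + 1), P * Q ^ b, P ^ a * Q, Q ^ (b + 1)} *
        Ideal.span {P, Q}) :
    A ∈ Ideal.span {P, Q} ∧
      ∃ h₁ h₂ : MvPolynomial (Fin (N + 1)) k,
        B - h₁ * f ∈ Ideal.span {P, Q} ∧ C - h₁ * g ∈ Ideal.span {P, Q} ∧
        D - h₂ * f ∈ Ideal.span {P, Q} ∧ E - h₂ * g ∈ Ideal.span {P, Q} := by
  have hPmem : P ∈ Ideal.span {P, Q} := Ideal.subset_span (by simp)
  have hQmem : Q ∈ Ideal.span {P, Q} := Ideal.subset_span (by simp)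
  have hP0 : P ≠ 0 := by
    intro h
    exact one_ne_zero (hPreg 1 (by rw [h, zero_mul]))
  have hQ0 : Q ≠ 0 := by
    intro h
    apply hprime.ne_top
    rw [Ideal.eq_top_iff_one]
    have h1 : (1 : MvPolynomial (Fin (N + 1)) k) ∈ Ideal.span {P} :=
      hQreg 1 (by rw [h, zero_mul]; exact Ideal.zero_mem _)
    exact Ideal.span_mono (Set.singleton_subset_iff.mpr (by simp)) h1
  have hQd : ∀ x : MvPolynomial (Fin (N + 1)) k, P ∣ Q * x → P ∣ x := fun x hx =>
    Ideal.mem_span_singleton.mp (hQreg x (Ideal.mem_span_singleton.mpr hx))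
  rw [Ideal.span_insert, Ideal.span_insert, Ideal.span_insert, Ideal.span_insert,
    Ideal.sup_mul, Ideal.sup_mul, Ideal.sup_mul, Ideal.sup_mul,
    Submodule.mem_sup] at hmem
  obtain ⟨x1, hx1, r1, hr1, he1⟩ := hmem
  rw [Submodule.mem_sup] at hr1
  obtain ⟨x2, hx2, r2, hr2, he2⟩ := hr1
  rw [Submodule.mem_sup] at hr2
  obtain ⟨x3, hx3, r3, hr3, he3⟩ := hr2
  rw [Submodule.mem_sup] at hr3
  obtain ⟨x4, hx4, x5, hx5, he4⟩ := hr3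
  rw [Ideal.mem_span_singleton_mul] at hx1 hx2 hx3 hx4 hx5
  obtain ⟨c1, hc1, hg1⟩ := hx1
  obtain ⟨c2, hc2, hg2⟩ := hx2
  obtain ⟨c3, hc3, hg3⟩ := hx3
  obtain ⟨c4, hc4, hg4⟩ := hx4
  obtain ⟨c5, hc5, hg5⟩ := hx5
  obtain ⟨a', rfl⟩ : ∃ a', a = 2 + a' := ⟨a - 2, by omega⟩
  obtain ⟨b', rfl⟩ : ∃ b', b = 2 + b' := ⟨b - 2, by omega⟩
  have hkey : ((A - c1) * f + (B - c2) * P + (D - c4) * Q) * P ^ (2 + a') +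
      ((A - c1) * g + (C - c3) * P + (E - c5) * Q) * Q ^ (2 + b') = 0 := by
    linear_combination -he1 - he2 - he3 - he4 - hg1 - hg2 - hg3 - hg4 - hg5
  obtain ⟨w, hw⟩ : Q ^ (2 + b') ∣ (A - c1) * f + (B - c2) * P + (D - c4) * Q := by
    apply auxPQpow hP0 hQ0 hQd (2 + a')
    exact ⟨-((A - c1) * g + (C - c3) * P + (E - c5) * Q), by linear_combination hkey⟩
  have hv : (A - c1) * g + (C - c3) * P + (E - c5) * Q = -(w * P ^ (2 + a')) := by
    have h0 : Q ^ (2 + b') * (((A - c1) * g + (C - c3) * P + (E - c5) * Q) +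
        w * P ^ (2 + a')) = 0 := by
      linear_combination hkey - P ^ (2 + a') * hw
    rcases mul_eq_zero.mp h0 with h | h
    · exact absurd h (pow_ne_zero _ hQ0)
    · linear_combination h
  have hA0 : A - c1 ∈ Ideal.span {P, Q} := by
    have hmul : (A - c1) * f ∈ Ideal.span {P, Q} := by
      rw [Ideal.mem_span_pair]
      exact ⟨-(B - c2), w * Q ^ (1 + b') - (D - c4), by linear_combination -hw⟩
    rcases hprime.mem_or_mem hmul with h | h
    · exact h
    · exact absurd h hfnot
  have hA : A ∈ Ideal.span {P, Q} := by
    simpa using Ideal.add_mem _ hA0 hc1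
  obtain ⟨α, β, hαβ⟩ := Ideal.mem_span_pair.mp hA0
  have h1 : ((B - c2) + α * f) * P + ((D - c4) + β * f - w * Q ^ (1 + b')) * Q = 0 := by
    linear_combination hw + f * hαβ
  have h2 : ((C - c3) + α * g + w * P ^ (1 + a')) * P + ((E - c5) + β * g) * Q = 0 := by
    linear_combination hv + g * hαβ
  obtain ⟨t, ht2, ht1⟩ := auxReg hP0 hQd h1
  obtain ⟨s, hs2, hs1⟩ := auxReg hP0 hQd h2
  refine ⟨hA, -α, -β, ?_, ?_, ?_, ?_⟩
  · have hB : B - (-α) * f = -(t * Q) + c2 := by linear_combination ht1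
    rw [hB]
    exact Ideal.add_mem _ (neg_mem (Ideal.mul_mem_left _ t hQmem)) hc2
  · have hC : C - (-α) * g = -(s * Q) - (w * P ^ a') * P + c3 := by linear_combination hs1
    rw [hC]
    exact Ideal.add_mem _ (Ideal.sub_mem _ (neg_mem (Ideal.mul_mem_left _ s hQmem))
      (Ideal.mul_mem_left _ _ hPmem)) hc3
  · have hD : D - (-β) * f = t * P + (w * Q ^ b') * Q + c4 := by linear_combination ht2
    rw [hD]
    exact Ideal.add_mem _ (Ideal.add_mem _ (Ideal.mul_mem_left _ t hPmem)
      (Ideal.mul_mem_left _ _ hQmem)) hc4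
  · have hE : E - (-β) * g = s * P + c5 := by linear_combination hs2
    rw [hE]
    exact Ideal.add_mem _ (Ideal.mul_mem_left _ s hPmem) hc5
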